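/- Let f be differentiable and L-smooth, g_i (i = 1,...,m) convex differentiable, C compact convex, p > L, and λ ≥ 0. Define L_p(x, z, λ) = f(x) + Σ λ_i g_i(x) + (p/2)‖x - z‖², and for z, z' ∈ C let the minimizers over C be x(λ, z) and x(λ, z'). Then ‖x(λ, z) - x(λ, z')‖ ≤ (p/(p-L))‖z - z'‖. -/

import Mathlib

open scoped RealInnerProductSpace
open Topology Filter intervalIntegral

section Aux
variable {E : Type*} [NormedAddCommGroup E] [InnerProductSpace ℝ E] [CompleteSpace E]

/-- Descent lemma (two-sided). -/
lemma descent_abs (f : E → ℝ) (f' : E → E) (L : ℝ) (hL : 0 ≤ L)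
    (hdiff : ∀ x, HasGradientAt f (f' x) x)
    (hlip : ∀ x x', ‖f' x - f' x'‖ ≤ L * ‖x - x'‖) (u v : E) :
    |f u - f v - ⟪f' v, u - v⟫| ≤ L / 2 * ‖u - v‖ ^ 2 := by
  set d := u - v with hd
  have cont_f' : Continuous f' := by
    have h : LipschitzWith (Real.toNNReal L) f' := by
      apply LipschitzWith.of_dist_le_mul
      intro x y
      rw [dist_eq_norm, dist_eq_norm]
      refine (hlip x y).trans ?_
      gcongr
      exact le_of_eq (Real.coe_toNNReal L hL).symm
    exact h.continuous
  have hcurve : ∀ t : ℝ, HasDerivAt (fun s : ℝ => v + s • d) d t := by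
    intro t
    simpa using ((hasDerivAt_id t).smul_const d).const_add v
  have hφ : ∀ t : ℝ, HasDerivAt (fun s : ℝ => f (v + s • d)) ⟪f' (v + t • d), d⟫ t := by
    intro t
    have h1 := ((hdiff (v + t • d)).hasFDerivAt).comp_hasDerivAt t (hcurve t)
    simp [InnerProductSpace.toDual_apply_apply] at h1; exact h1
  have hcont : Continuous fun t : ℝ => ⟪f' (v + t • d), d⟫ :=
    (cont_f'.comp (continuous_const.add (continuous_id.smul continuous_const))).inner
      continuous_const
  have hint : IntervalIntegrable (fun t : ℝ => ⟪f' (v + t • d), d⟫) MeasureTheory.volume 0 1 :=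
    hcont.intervalIntegrable 0 1
  have hFTC : ∫ t in (0:ℝ)..1, ⟪f' (v + t • d), d⟫ = f u - f v := by
    have := integral_eq_sub_of_hasDerivAt (f := fun s : ℝ => f (v + s • d))
      (f' := fun t : ℝ => ⟪f' (v + t • d), d⟫) (fun t _ => hφ t) hint
    simpa [hd] using this
  have hbound : ∀ t ∈ Set.Icc (0:ℝ) 1, |⟪f' (v + t • d), d⟫ - ⟪f' v, d⟫| ≤ L * t * ‖d‖ ^ 2 := by
    intro t ht
    rw [← inner_sub_left]
    refine (abs_real_inner_le_norm _ _).trans ?_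
    have h1 : ‖f' (v + t • d) - f' v‖ ≤ L * (t * ‖d‖) := by
      have := hlip (v + t • d) v
      simpa [norm_smul, abs_of_nonneg ht.1, mul_assoc] using this
    calc ‖f' (v + t • d) - f' v‖ * ‖d‖ ≤ L * (t * ‖d‖) * ‖d‖ := by gcongr
      _ = L * t * ‖d‖ ^ 2 := by ring
  have hdiff_eq : f u - f v - ⟪f' v, d⟫
      = ∫ t in (0:ℝ)..1, (⟪f' (v + t • d), d⟫ - ⟪f' v, d⟫) := by
    rw [intervalIntegral.integral_sub hint (intervalIntegrable_const), hFTC]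
    simp
  have hintsub : IntervalIntegrable (fun t : ℝ => ⟪f' (v + t • d), d⟫ - ⟪f' v, d⟫)
      MeasureTheory.volume 0 1 := hint.sub intervalIntegrable_const
  have hintbnd : IntervalIntegrable (fun t : ℝ => L * t * ‖d‖ ^ 2) MeasureTheory.volume 0 1 := by
    apply Continuous.intervalIntegrable; continuity
  have hval : (∫ t in (0:ℝ)..1, L * t * ‖d‖ ^ 2) = L / 2 * ‖d‖ ^ 2 := by
    have : (fun t : ℝ => L * t * ‖d‖ ^ 2) = fun t : ℝ => (L * ‖d‖ ^ 2) * t := by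
      funext t; ring
    rw [this, intervalIntegral.integral_const_mul, integral_id]
    ring
  rw [hdiff_eq]
  calc |∫ t in (0:ℝ)..1, (⟪f' (v + t • d), d⟫ - ⟪f' v, d⟫)|
      ≤ ∫ t in (0:ℝ)..1, |⟪f' (v + t • d), d⟫ - ⟪f' v, d⟫| := by
        apply intervalIntegral.abs_integral_le_integral_abs; norm_num
    _ ≤ ∫ t in (0:ℝ)..1, L * t * ‖d‖ ^ 2 := by
        apply intervalIntegral.integral_mono_on (by norm_num) hintsub.abs hintbnd hbound
    _ = L / 2 * ‖d‖ ^ 2 := hval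

/-- Three-point inequality at a minimizer of the proximal Lagrangian. -/
lemma three_point (f : E → ℝ) (f' : E → E) {m : ℕ} (g : Fin m → E → ℝ)
    (L p : ℝ) (hL : 0 ≤ L) (hp : L < p)
    (C : Set E) (hCconv : Convex ℝ C)
    (hdiff : ∀ x, HasGradientAt f (f' x) x)
    (hlip : ∀ x x', ‖f' x - f' x'‖ ≤ L * ‖x - x'‖)
    (hgconv : ∀ i, ConvexOn ℝ Set.univ (g i))
    (lam : Fin m → ℝ) (hlam : ∀ i, 0 ≤ lam i)
    (z x : E) (hx : x ∈ C)
    (hmin : ∀ u ∈ C, f x + (∑ i, lam i * g i x) + p / 2 * ‖x - z‖ ^ 2 ≤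
        f u + (∑ i, lam i * g i u) + p / 2 * ‖u - z‖ ^ 2)
    (u : E) (hu : u ∈ C) :
    f x + (∑ i, lam i * g i x) + p / 2 * ‖x - z‖ ^ 2 + (p - L) / 2 * ‖u - x‖ ^ 2 ≤
      f u + (∑ i, lam i * g i u) + p / 2 * ‖u - z‖ ^ 2 := by
  set d := u - x with hd
  set Gx := ∑ i, lam i * g i x with hGx
  set Gu := ∑ i, lam i * g i u with hGu
  set A := ‖x - z‖ ^ 2 with hA
  set B := ‖u - z‖ ^ 2 with hB
  set D := ‖d‖ ^ 2 with hD
  have hstep : ∀ t ∈ Set.Ioc (0:ℝ) 1,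
      f x + Gx + p / 2 * A + (p * (1 - t) - L - L * t) / 2 * D ≤ f u + Gu + p / 2 * B := by
    intro t ht
    set xt := x + t • d with hxt
    have hxtC : xt ∈ C := by
      have h := hCconv hx hu (a := 1 - t) (b := t) (by linarith [ht.2]) (le_of_lt ht.1)
        (by ring)
      have : (1 - t) • x + t • u = xt := by
        rw [hxt, hd]; module
      rw [this] at h; exact h
    -- minimality at xt
    have hmin' := hmin xt hxtC
    -- (a) upper descent at xt around x
    have ha := (abs_le.mp (descent_abs f f' L hL hdiff hlip xt x)).2
    have hxtx : xt - x = t • d := by rw [hxt]; abel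
    rw [hxtx, real_inner_smul_right, norm_smul, Real.norm_eq_abs,
      abs_of_nonneg (le_of_lt ht.1), mul_pow, ← hD] at ha
    -- (b) lower descent at u around x
    have hb := (abs_le.mp (descent_abs f f' L hL hdiff hlip u x)).1
    rw [← hd, ← hD] at hb
    have hbt := mul_le_mul_of_nonneg_left (neg_le_sub_iff_le_add.mp hb) (le_of_lt ht.1)
    -- (c) convexity of the weighted sum
    have hc : (∑ i, lam i * g i xt) ≤ (1 - t) * Gx + t * Gu := by
      rw [hGx, hGu, Finset.mul_sum, Finset.mul_sum, ← Finset.sum_add_distrib]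
      apply Finset.sum_le_sum
      intro i _
      have hgi := (hgconv i).2 (Set.mem_univ x) (Set.mem_univ u)
        (show (0:ℝ) ≤ 1 - t by linarith [ht.2]) ht.1.le (by ring)
      have hxteq : (1 - t) • x + t • u = xt := by rw [hxt, hd]; module
      rw [hxteq] at hgi
      calc lam i * g i xt ≤ lam i * ((1 - t) * g i x + t * g i u) := by
            exact mul_le_mul_of_nonneg_left hgi (hlam i)
        _ = (1 - t) * (lam i * g i x) + t * (lam i * g i u) := by ring
    -- (d) quadratic identity
    have hdq : ‖xt - z‖ ^ 2 = (1 - t) * A + t * B - t * (1 - t) * D := by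
      have h1 : xt - z = (x - z) + t • d := by rw [hxt]; abel
      have h2 : u - z = (x - z) + d := by rw [hd]; abel
      rw [h1, hA, hB, hD, h2, norm_add_sq_real, norm_add_sq_real,
        real_inner_smul_right, norm_smul, Real.norm_eq_abs,
        abs_of_nonneg (le_of_lt ht.1), mul_pow]
      ring
    rw [hdq] at hmin'
    -- combine (all linear after premultiplying (b) by t); divide by t
    rw [← mul_le_mul_iff_right₀ ht.1]
    linarith [hmin', ha, hbt, hc]
  -- take the limit t → 0⁺
  have hcont : Continuous fun t : ℝ =>
      f x + Gx + p / 2 * A + (p * (1 - t) - L - L * t) / 2 * D := by continuity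
  have htend : Filter.Tendsto (fun t : ℝ =>
      f x + Gx + p / 2 * A + (p * (1 - t) - L - L * t) / 2 * D) (𝓝[>] (0:ℝ))
      (𝓝 (f x + Gx + p / 2 * A + (p - L) / 2 * D)) :=
    (hcont.tendsto' 0 _ (by norm_num)).mono_left nhdsWithin_le_nhds
  refine le_of_tendsto htend ?_
  filter_upwards [Ioc_mem_nhdsGT_of_mem (by norm_num : (0:ℝ) ∈ Set.Ico (0:ℝ) 1)]
    with t ht using hstep t ht

end Aux

/-- Lipschitz continuity in `z` of the minimizer `x(λ, z)` of the proximal Lagrangian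
`L_p(x, z, λ) = f(x) + Σ λᵢ gᵢ(x) + (p/2)‖x - z‖²` over `C`:
`‖x(λ, z) - x(λ, z')‖ ≤ (p/(p-L))‖z - z'‖`. -/
theorem prox_lagrangian_minimizer_lipschitz
    {n m : ℕ} (f : EuclideanSpace ℝ (Fin n) → ℝ)
    (f' : EuclideanSpace ℝ (Fin n) → EuclideanSpace ℝ (Fin n))
    (g : Fin m → EuclideanSpace ℝ (Fin n) → ℝ)
    (L p : ℝ) (hL : 0 ≤ L) (hp : L < p)
    (C : Set (EuclideanSpace ℝ (Fin n))) (hCcompact : IsCompact C) (hCconv : Convex ℝ C)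
    (hdiff : ∀ x, HasGradientAt f (f' x) x)
    (hlip : ∀ x x', ‖f' x - f' x'‖ ≤ L * ‖x - x'‖)
    (hgconv : ∀ i, ConvexOn ℝ Set.univ (g i))
    (hgdiff : ∀ i, Differentiable ℝ (g i))
    (lam : Fin m → ℝ) (hlam : ∀ i, 0 ≤ lam i)
    (xm : EuclideanSpace ℝ (Fin n) → EuclideanSpace ℝ (Fin n))
    (hxm : ∀ z, xm z ∈ C ∧
      ∀ u ∈ C, f (xm z) + (∑ i, lam i * g i (xm z)) + p / 2 * ‖xm z - z‖ ^ 2 ≤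
        f u + (∑ i, lam i * g i u) + p / 2 * ‖u - z‖ ^ 2) :
    ∀ z ∈ C, ∀ z' ∈ C, ‖xm z - xm z'‖ ≤ p / (p - L) * ‖z - z'‖ := by
  intro z hz z' hz'
  set x := xm z with hxz
  set x' := xm z' with hxz'
  have h1 := three_point f f' g L p hL hp C hCconv hdiff hlip hgconv lam hlam
    z x (hxm z).1 (hxm z).2 x' (hxm z').1
  have h2 := three_point f f' g L p hL hp C hCconv hdiff hlip hgconv lam hlam
    z' x' (hxm z').1 (hxm z').2 x (hxm z).1
  have hident : ‖x' - z‖ ^ 2 - ‖x' - z'‖ ^ 2 + ‖x - z'‖ ^ 2 - ‖x - z‖ ^ 2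
      = 2 * ⟪x' - x, z' - z⟫ := by
    simp only [norm_sub_sq_real, inner_sub_left, inner_sub_right]
    ring
  have hsym : ‖x' - x‖ = ‖x - x'‖ := norm_sub_rev _ _
  have hkey : (p - L) * ‖x - x'‖ ^ 2 ≤ p * ⟪x' - x, z' - z⟫ := by
    have hxx : ‖x' - x‖ ^ 2 = ‖x - x'‖ ^ 2 := by rw [hsym]
    nlinarith [h1, h2, hident, hxx]
  have hcs : ⟪x' - x, z' - z⟫ ≤ ‖x - x'‖ * ‖z - z'‖ := by
    calc ⟪x' - x, z' - z⟫ ≤ ‖x' - x‖ * ‖z' - z‖ := real_inner_le_norm _ _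
      _ = ‖x - x'‖ * ‖z - z'‖ := by rw [hsym, norm_sub_rev z']
  have hpL : 0 < p - L := by linarith
  rcases eq_or_lt_of_le (norm_nonneg (x - x')) with h0 | h0
  · rw [← h0]
    have hp0 : 0 < p := lt_of_le_of_lt hL hp
    positivity
  · rw [div_mul_eq_mul_div, le_div_iff₀ hpL]
    nlinarith [hkey, hcs, h0]
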